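/- If F is a cumulative distribution function satisfying the functional equation F(x) = p·F(x/β) + q·F(x/β + 1 - 1/β) for all real x, then F(x) = 0 for all x ≤ 0. -/

import Mathlib

theorem stmt2 (β p q : ℝ) (hβ0 : 0 < β) (hβ : β ≤ 1/2)
    (hp0 : 0 < p) (hp1 : p < 1) (hq : q = 1 - p)
    (F : ℝ → ℝ) (hmono : Monotone F)
    (hrc : ∀ x : ℝ, ContinuousWithinAt F (Set.Ici x) x)
    (hbot : Filter.Tendsto F Filter.atBot (nhds 0))
    (htop : Filter.Tendsto F Filter.atTop (nhds 1))
    (hF : ∀ x : ℝ, F x = p * F (x / β) + q * F (x / β + 1 - 1 / β)) :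
    ∀ x : ℝ, x ≤ 0 → F x = 0 := by
  have hq0 : 0 < q := by rw [hq]; linarith
  have h2β : 2 ≤ 1 / β := by
    rw [le_div_iff₀ hβ0]; linarith
  -- key: for x ≤ 0, F x = F (2 * x)
  have key : ∀ x : ℝ, x ≤ 0 → F x = F (2 * x) := by
    intro x hx
    have ha : x / β ≤ 2 * x := by
      rw [div_eq_mul_inv, mul_comm]
      have : (2:ℝ) ≤ β⁻¹ := by rwa [← one_div]
      nlinarith
    have hb : x / β + 1 - 1 / β ≤ 2 * x := by
      have : x / β ≤ 2 * x := ha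
      linarith
    have h1 : F x ≤ F (2 * x) := by
      rw [hF x]
      have hA := mul_le_mul_of_nonneg_left (hmono ha) hp0.le
      have hB := mul_le_mul_of_nonneg_left (hmono hb) hq0.le
      have hE : p * F (2 * x) + q * F (2 * x) = F (2 * x) := by rw [hq]; ring
      linarith
    have h2 : F (2 * x) ≤ F x := hmono (by linarith)
    linarith
  -- iterate
  have iter : ∀ (n : ℕ) (x : ℝ), x ≤ 0 → F x = F ((2:ℝ)^n * x) := by
    intro n
    induction n with
    | zero => intro x hx; simp
    | succ k ih =>
      intro x hx
      have h1 := key x hx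
      have h2 := ih (2 * x) (by linarith)
      rw [h1, h2]; ring_nf
  -- x < 0 case
  have hneg : ∀ x : ℝ, x < 0 → F x = 0 := by
    intro x hx
    have htend : Filter.Tendsto (fun n : ℕ => (2:ℝ)^n * x) Filter.atTop Filter.atBot := by
      have h2 : Filter.Tendsto (fun n : ℕ => (2:ℝ)^n) Filter.atTop Filter.atTop :=
        tendsto_pow_atTop_atTop_of_one_lt (by norm_num)
      exact h2.atTop_mul_const_of_neg hx
    have hcomp : Filter.Tendsto (fun n : ℕ => F ((2:ℝ)^n * x)) Filter.atTop (nhds 0) :=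
      hbot.comp htend
    have hconst : Filter.Tendsto (fun n : ℕ => F ((2:ℝ)^n * x)) Filter.atTop (nhds (F x)) := by
      have : (fun n : ℕ => F ((2:ℝ)^n * x)) = fun _ => F x := by
        funext n; exact (iter n x hx.le).symm
      rw [this]; exact tendsto_const_nhds
    exact tendsto_nhds_unique hconst hcomp
  intro x hx
  rcases lt_or_eq_of_le hx with h | h
  · exact hneg x h
  · subst h
    have h0 := hF 0
    have hz : (0:ℝ) / β = 0 := by simp
    rw [hz] at h0
    have hb0 : F (0 + 1 - 1 / β) = 0 := hneg _ (by linarith)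
    rw [hb0] at h0
    have : F 0 * (1 - p) = 0 := by linarith
    have h1p : (1:ℝ) - p ≠ 0 := by linarith
    exact (mul_eq_zero.mp this).resolve_right h1p
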